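/- Suppose (R,θ) and (R̃,θ̃) are two solutions of dR/dZ = -tan θ + R/(2Z), dθ/dZ = (n-1)(1/cos θ - 1/R) on (0,∞) in R > 0, θ ∈ (-π/2,π/2), both converging to (1,0) as Z → ∞, and suppose (R,θ) satisfies R(Z) = 1 + o(1/Z) and θ(Z) = 1/(2Z) + o(1/Z) as Z → ∞. Set ρ = R̃ - R, φ = θ̃ - θ, and h(Z) = H(1+ρ(Z), φ(Z)) with H(R,θ) = R^(n-1)(cos θ - (n-1)R/n). Then dh/dZ = -(n-1)·(ρ²+φ²)/(2Z)·(1 + o(1)) as Z → ∞. -/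

import Mathlib

set_option maxHeartbeats 1000000

open Real Filter


lemma half_le_cos {x : ℝ} (hx : |x| ≤ 1) : (1/2 : ℝ) ≤ Real.cos x := by
  have h := Real.one_sub_sq_div_two_le_cos (x := x)
  have h2 : x^2 ≤ 1 := by nlinarith [sq_abs x, abs_nonneg x]
  linarith

lemma abs_one_sub_cos_le {x : ℝ} : |1 - Real.cos x| ≤ x^2/2 := by
  have h := Real.one_sub_sq_div_two_le_cos (x := x)
  have h2 := Real.cos_le_one x
  rw [abs_of_nonneg (by linarith)]
  linarith

lemma abs_sin_sub_le_of_nonneg {x : ℝ} (h0 : 0 ≤ x) (h1 : x ≤ 1) :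
    |Real.sin x - x| ≤ x^3/4 := by
  rcases eq_or_lt_of_le h0 with h | h
  · simp [← h]
  · have hs1 := Real.sin_lt h
    have hs2 := Real.sin_gt_sub_cube h
    have hs3 := pow_pos h 3
    rw [abs_of_nonpos (by linarith)]
    linarith

lemma abs_sin_sub_le {x : ℝ} (hx : |x| ≤ 1) : |Real.sin x - x| ≤ |x|^3/4 := by
  rcases le_or_gt 0 x with h | h
  · rw [abs_of_nonneg h]
    exact abs_sin_sub_le_of_nonneg h (by rwa [abs_of_nonneg h] at hx)
  · have h0 : 0 ≤ -x := by linarith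
    have h1 : -x ≤ 1 := by rw [← abs_of_nonneg h0, abs_neg]; exact hx
    have := abs_sin_sub_le_of_nonneg h0 h1
    rw [Real.sin_neg] at this
    calc |Real.sin x - x| = |-Real.sin x - -x| := by rw [← abs_neg]; ring_nf
      _ ≤ (-x)^3/4 := this
      _ = |x|^3/4 := by rw [abs_of_neg h]

lemma abs_tan_sub_le {x : ℝ} (hx : |x| ≤ 1) : |Real.tan x - x| ≤ 2*|x|^3 := by
  have hc : (1/2 : ℝ) ≤ Real.cos x := half_le_cos hx
  have hc0 : Real.cos x ≠ 0 := by linarith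
  have key : Real.tan x - x = (Real.sin x - x * Real.cos x) / Real.cos x := by
    rw [Real.tan_eq_sin_div_cos]; field_simp
  have hnum : |Real.sin x - x * Real.cos x| ≤ (3/4)*|x|^3 := by
    have h1 : |Real.sin x - x| ≤ |x|^3/4 := abs_sin_sub_le hx
    have h2 : |x * (1 - Real.cos x)| ≤ |x| * (x^2/2) := by
      rw [abs_mul]
      exact mul_le_mul_of_nonneg_left abs_one_sub_cos_le (abs_nonneg x)
    have h3 : |x| * (x^2/2) = |x|^3/2 := by
      rw [← sq_abs x]; ring
    calc |Real.sin x - x * Real.cos x|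
        = |(Real.sin x - x) + x * (1 - Real.cos x)| := by ring_nf
      _ ≤ |Real.sin x - x| + |x * (1 - Real.cos x)| := abs_add_le _ _
      _ ≤ |x|^3/4 + |x|^3/2 := by rw [h3] at h2; linarith
      _ = (3/4)*|x|^3 := by ring
  rw [key, abs_div, abs_of_pos (by linarith : (0:ℝ) < Real.cos x)]
  rw [div_le_iff₀ (by linarith : (0:ℝ) < Real.cos x)]
  nlinarith [abs_nonneg (Real.sin x - x * Real.cos x), pow_nonneg (abs_nonneg x) 3]

lemma abs_tan_le {x : ℝ} (hx : |x| ≤ 1) : |Real.tan x| ≤ 3*|x| := by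
  have h1 := abs_tan_sub_le hx
  have h2 : |x|^3 ≤ |x| := by
    calc |x|^3 = |x|^2 * |x| := by ring
      _ ≤ 1 * |x| := by
          apply mul_le_mul_of_nonneg_right _ (abs_nonneg x)
          nlinarith [abs_nonneg x]
      _ = |x| := by ring
  calc |Real.tan x| = |(Real.tan x - x) + x| := by norm_num
    _ ≤ |Real.tan x - x| + |x| := abs_add_le _ _
    _ ≤ 2*|x|^3 + |x| := by linarith
    _ ≤ 3*|x| := by linarith

lemma abs_pow_sub_one_le {x : ℝ} (m : ℕ) (hx : |x| ≤ 1) :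
    |(1+x)^m - 1| ≤ (m:ℝ) * 2^m * |x| := by
  induction m with
  | zero => simp
  | succ k ih =>
    have habs : |1 + x| ≤ 2 := by
      calc |1 + x| ≤ |(1:ℝ)| + |x| := abs_add_le _ _
        _ ≤ 2 := by rw [abs_one]; linarith
    have key : (1+x)^(k+1) - 1 = (1+x)*((1+x)^k - 1) + x := by ring
    have h2 : |(1+x)*((1+x)^k - 1)| ≤ 2 * ((k:ℝ) * 2^k * |x|) := by
      rw [abs_mul]
      apply mul_le_mul habs ih (abs_nonneg _) (by norm_num)
    have hp : (1:ℝ) ≤ 2^(k+1) := one_le_pow₀ (by norm_num)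
    calc |(1+x)^(k+1) - 1| = |(1+x)*((1+x)^k - 1) + x| := by rw [key]
      _ ≤ |(1+x)*((1+x)^k - 1)| + |x| := abs_add_le _ _
      _ ≤ 2 * ((k:ℝ) * 2^k * |x|) + |x| := by linarith
      _ ≤ ((k:ℝ)+1) * 2^(k+1) * |x| := by
          have h2k : (2:ℝ)^(k+1) = 2*2^k := by ring
          have hx2 : |x| ≤ 2^(k+1) * |x| :=
            le_mul_of_one_le_left (abs_nonneg x) hp
          rw [h2k] at hx2 ⊢
          nlinarith []
      _ = ((k+1:ℕ):ℝ) * 2^(k+1) * |x| := by push_cast; ring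
lemma amgm (a b : ℝ) : |a| * |b| ≤ a^2 + b^2 := by
  nlinarith [sq_nonneg (|a| - |b|), sq_abs a, sq_abs b]

lemma bnd1 (M T x y : ℝ) (hM : 0 ≤ M) (hT : 0 ≤ T) :
    T*(y^2/2) + M*T*(x^2) ≤ (M+1)*T*(x^2+y^2) := by
  nlinarith [mul_nonneg hT (sq_nonneg x), mul_nonneg hT (sq_nonneg y),
    mul_nonneg (mul_nonneg hM hT) (sq_nonneg y)]

lemma bnd2 (x y : ℝ) (hy : |y| ≤ 1) : (y^2/2 + |x|) * |y| ≤ 2*(x^2+y^2) := by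
  have h1 : |x| * |y| ≤ x^2+y^2 := amgm x y
  have h2 : y^2/2 * |y| ≤ y^2/2 := by nlinarith [abs_nonneg y, sq_nonneg y]
  nlinarith [sq_nonneg x, sq_nonneg y]

lemma bnd3 (a b c : ℝ) (ha : 1/2 ≤ a) (hb : 1/2 ≤ b) (hc : 1/2 ≤ c) :
    (1/2:ℝ)*((1/2)*(1/2)) ≤ a*(b*c) := by
  have hbc : (1/2:ℝ)*(1/2) ≤ b*c := by nlinarith
  nlinarith [hbc]

lemma bnd4 (x y : ℝ) (hy : |y| ≤ 1) : |y| *y^2 ≤ x^2+y^2 := by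
  nlinarith [sq_nonneg x, sq_nonneg y, abs_nonneg y, sq_abs y]

lemma bnd5 (d y : ℝ) (h : |y| ≤ d) (hd1 : d ≤ 1) :
    |y| *(2* |y|^3) + (3* |y|)*(|y|^3/4) ≤ 3*(d*y^2) := by
  have hd0 : 0 ≤ d := le_trans (abs_nonneg y) h
  have h2 : |y| * |y| ≤ d*d := mul_self_le_mul_self (abs_nonneg y) h
  have h3 : d*d ≤ d := by nlinarith
  have h4 : |y| * |y| *(|y| * |y|) ≤ d*(|y| * |y|) :=
    mul_le_mul_of_nonneg_right (h2.trans h3) (mul_self_nonneg _)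
  have h5 : |y| * |y| = y^2 := by rw [abs_mul_abs_self]; ring
  nlinarith [h4, h5, sq_nonneg y, mul_nonneg hd0 (sq_nonneg y)]

lemma bnd6 (M T : ℝ) (hM : 0 ≤ M) (hT : 1 ≤ T) :
    (M+1)*(24 + 72*((M+1)*T)) ≤ 96*((M+1)^2*T) := by nlinarith

lemma bnd7 (M : ℝ) (hM : 0 ≤ M) :
    (M+2)*(M+1) + 216*(M+1) + 72*(M+1) + 3*(M+1) + 96*((M+1)^2*2) ≤ 1024*(M+2)^2 := by
  nlinarith

lemma key_identity (ν P sθ cθ sφ cφ ρ φ R Z : ℝ)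
    (hcθ : cθ ≠ 0) (hcφ : cφ ≠ 0) (hct : cθ*cφ - sθ*sφ ≠ 0)
    (hR : R ≠ 0) (hRt : R + ρ ≠ 0) (h1ρ : (1:ℝ) + ρ ≠ 0) (hZ : Z ≠ 0) (hν : ν ≠ 0) :
    (ν-1)*P*(-((sθ*cφ + cθ*sφ)/(cθ*cφ - sθ*sφ)) + sθ/cθ + ρ/(2*Z))*(cφ - (ν-1)*(1+ρ)/ν)
      + (1+ρ)*P*(-sφ*((ν-1) * (1/(cθ*cφ - sθ*sφ) - 1/cθ - 1/(R+ρ) + 1/R))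
          - (ν-1)*(-((sθ*cφ + cθ*sφ)/(cθ*cφ - sθ*sφ)) + sθ/cθ + ρ/(2*Z))/ν)
      + (ν-1)*(ρ^2+φ^2)/(2*Z)
    = ((ν-1)*(P*(cφ - 1) + ρ*(1-P)))*(ρ/(2*Z))
      + (-((ν-1)*P*(cφ-(1+ρ))) * (sθ/cθ) * ((sθ*cφ + cθ*sφ)/(cθ*cφ - sθ*sφ)) * (sφ/cφ))
      + ((1+ρ)*P*sφ*(ν-1)* (ρ*(R-1)*(R+1+ρ)/((1+ρ)*R*(R+ρ))))
      + (-((1+ρ)*P*sφ)*(ν-1)*(1/cθ - 1)*(1/cφ - 1))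
      + ((-((1+ρ)*P*sφ))*(ν-1)*(sθ/cθ)*(sφ/cφ)*(1/(cθ*cφ - sθ*sφ)) + (ν-1)*φ^2/(2*Z)) := by
  have hct' : cφ * cθ - sθ * sφ ≠ 0 := by rwa [mul_comm cφ]
  field_simp
  ring

lemma key_bound (n : ℕ) (hn : 2 ≤ n) (δ Z ρ φ θ R : ℝ)
    (hδ : δ ≤ 1/2) (hδ0 : 0 < δ)
    (hZ : 1 ≤ Z) (hZδ : 1/Z ≤ δ)
    (hρ : |ρ| ≤ δ) (hφ : |φ| ≤ δ)
    (hθ1 : |θ| ≤ 1/Z) (hθ2 : |θ - 1/(2*Z)| ≤ δ/Z)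
    (hRb : |R - 1| ≤ δ/Z) (hθtb : |θ + φ| ≤ δ) (hRtb : |R + ρ - 1| ≤ 1/2) :
    |((n:ℝ)-1) * (1+ρ)^(n-2) * ((-Real.tan (θ+φ) + (R+ρ)/(2*Z)) - (-Real.tan θ + R/(2*Z)))
        * (Real.cos φ - ((n:ℝ)-1)*(1+ρ)/n)
      + (1+ρ)^(n-1) * (-Real.sin φ * ((((n:ℝ)-1) * (1/Real.cos (θ+φ) - 1/(R+ρ)))
            - (((n:ℝ)-1) * (1/Real.cos θ - 1/R)))
          - ((n:ℝ)-1) * ((-Real.tan (θ+φ) + (R+ρ)/(2*Z)) - (-Real.tan θ + R/(2*Z))) / n)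
      + ((n:ℝ)-1) * (ρ^2 + φ^2) / (2*Z)|
    ≤ 2^(n+8) * n^2 * (δ * ((ρ^2 + φ^2)/(2*Z))) := by
  obtain ⟨m, rfl⟩ : ∃ m, n = m + 2 := ⟨n-2, by omega⟩
  have hZ0 : (0:ℝ) < Z := by linarith
  have hZne : Z ≠ 0 := ne_of_gt hZ0
  have hδZ : δ/Z ≤ δ := div_le_self hδ0.le hZ
  have hδ1 : δ ≤ 1 := by linarith
  have hρ1 : |ρ| ≤ 1 := hρ.trans hδ1
  have hφ1 : |φ| ≤ 1 := hφ.trans hδ1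
  obtain ⟨hρlo, hρhi⟩ := abs_le.mp hρ
  obtain ⟨hφlo, hφhi⟩ := abs_le.mp hφ
  have h1ρlo : (1/2:ℝ) ≤ 1 + ρ := by linarith
  have h1ρhi : 1 + ρ ≤ (3/2:ℝ) := by linarith
  have h1ρ0 : (1:ℝ) + ρ ≠ 0 := by linarith
  have hZ1 : 1/Z ≤ 1 := by rw [div_le_one hZ0]; linarith
  have hθa : |θ| ≤ 1 := hθ1.trans hZ1
  have hθta : |θ+φ| ≤ 1 := hθtb.trans hδ1
  have hcθ : (1/2:ℝ) ≤ Real.cos θ := half_le_cos hθa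
  have hcφ : (1/2:ℝ) ≤ Real.cos φ := half_le_cos hφ1
  have hct : (1/2:ℝ) ≤ Real.cos (θ+φ) := half_le_cos hθta
  have hcθ1 := Real.cos_le_one θ
  have hcφ1 := Real.cos_le_one φ
  have hct1 := Real.cos_le_one (θ+φ)
  have hcθ0 : Real.cos θ ≠ 0 := by linarith
  have hcφ0 : Real.cos φ ≠ 0 := by linarith
  have hct0 : Real.cos (θ+φ) ≠ 0 := by linarith
  have hctprod : Real.cos θ * Real.cos φ - Real.sin θ * Real.sin φ ≠ 0 := by
    rw [← Real.cos_add]; exact hct0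
  obtain ⟨hRb1, hRb2⟩ := abs_le.mp hRb
  have hRlo : (1/2:ℝ) ≤ R := by have := hδZ; linarith
  have hRhi : R ≤ (3/2:ℝ) := by have := hδZ; linarith
  have hR0 : R ≠ 0 := by linarith
  obtain ⟨hRtb1, hRtb2⟩ := abs_le.mp hRtb
  have hRtlo : (1/2:ℝ) ≤ R + ρ := by linarith
  have hRthi : R + ρ ≤ (3/2:ℝ) := by linarith
  have hRt0 : R + ρ ≠ 0 := by linarith
  have hν : ((m:ℝ)+2) ≠ 0 := by positivity
  have hm0 : (0:ℝ) ≤ (m:ℝ) := Nat.cast_nonneg m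
  -- powers
  have hP0 : (0:ℝ) < (1+ρ)^m := pow_pos (by linarith) m
  have hPle : (1+ρ)^m ≤ 2^m := pow_le_pow_left₀ (by linarith) (by linarith) m
  have h2m1 : (1:ℝ) ≤ 2^m := one_le_pow₀ (by norm_num)
  have h2m0 : (0:ℝ) < 2^m := by positivity
  have h1P : |1 - (1+ρ)^m| ≤ (m:ℝ)*2^m* |ρ| := by
    rw [abs_sub_comm]; exact abs_pow_sub_one_le m hρ1
  have h1P' : |1 - (1+ρ)*(1+ρ)^m| ≤ ((m:ℝ)+1)*2^(m+1)* |ρ| := by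
    rw [abs_sub_comm, show (1+ρ)*(1+ρ)^m = (1+ρ)^(m+1) by rw [pow_succ]; ring]
    have := abs_pow_sub_one_le (m+1) hρ1
    push_cast at this ⊢
    exact this
  -- trig bounds
  have htθ : |Real.tan θ| ≤ 3*(1/Z) :=
    (abs_tan_le hθa).trans (by linarith)
  have htθt : |Real.tan (θ+φ)| ≤ 3*δ :=
    (abs_tan_le hθta).trans (by linarith)
  have htφ : |Real.tan φ| ≤ 3* |φ| := abs_tan_le hφ1
  have hsφ : |Real.sin φ| ≤ |φ| := Real.abs_sin_le_abs
  have hcφ2 : |Real.cos φ - 1| ≤ φ^2/2 := by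
    rw [abs_sub_comm]; exact abs_one_sub_cos_le
  have h1cθ : |1/Real.cos θ - 1| ≤ θ^2 := by
    have he : 1/Real.cos θ - 1 = (1 - Real.cos θ)/Real.cos θ := by field_simp
    rw [he, abs_div, abs_of_pos (by linarith : (0:ℝ) < Real.cos θ)]
    calc |1 - Real.cos θ|/Real.cos θ ≤ (θ^2/2)/(1/2) := by
          apply div_le_div₀ (by positivity) abs_one_sub_cos_le (by norm_num) hcθ
      _ = θ^2 := by ring
  have h1cφ : |1/Real.cos φ - 1| ≤ φ^2 := by
    have he : 1/Real.cos φ - 1 = (1 - Real.cos φ)/Real.cos φ := by field_simp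
    rw [he, abs_div, abs_of_pos (by linarith : (0:ℝ) < Real.cos φ)]
    calc |1 - Real.cos φ|/Real.cos φ ≤ (φ^2/2)/(1/2) := by
          apply div_le_div₀ (by positivity) abs_one_sub_cos_le (by norm_num) hcφ
      _ = φ^2 := by ring
  -- square facts
  have hρr : ρ^2 ≤ ρ^2+φ^2 := by linarith [sq_nonneg φ]
  have hφr : φ^2 ≤ ρ^2+φ^2 := by linarith [sq_nonneg ρ]
  have hρφr : |ρ| * |φ| ≤ ρ^2+φ^2 := amgm ρ φ
  have hr0 : (0:ℝ) ≤ ρ^2+φ^2 := by positivity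
  -- the identity
  have hid := key_identity ((m:ℝ)+2) ((1+ρ)^m) (Real.sin θ) (Real.cos θ)
    (Real.sin φ) (Real.cos φ) ρ φ R Z hcθ0 hcφ0 hctprod hR0 hRt0 h1ρ0 hZne hν
  have hEq : ((((m+2:ℕ)):ℝ)-1) * (1+ρ)^(m+2-2) * ((-Real.tan (θ+φ) + (R+ρ)/(2*Z)) - (-Real.tan θ + R/(2*Z)))
        * (Real.cos φ - (((m+2:ℕ):ℝ)-1)*(1+ρ)/(m+2:ℕ))
      + (1+ρ)^(m+2-1) * (-Real.sin φ * (((((m+2:ℕ):ℝ)-1) * (1/Real.cos (θ+φ) - 1/(R+ρ)))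
            - ((((m+2:ℕ):ℝ)-1) * (1/Real.cos θ - 1/R)))
          - (((m+2:ℕ):ℝ)-1) * ((-Real.tan (θ+φ) + (R+ρ)/(2*Z)) - (-Real.tan θ + R/(2*Z))) / (m+2:ℕ))
      + (((m+2:ℕ):ℝ)-1) * (ρ^2 + φ^2) / (2*Z)
      = (((m:ℝ)+1) * ((1+ρ)^m*(Real.cos φ - 1) + ρ*(1-(1+ρ)^m)) * (ρ/(2*Z)))
        + (-(((m:ℝ)+1) * (1+ρ)^m * (Real.cos φ - (1+ρ)) * (Real.tan θ * (Real.tan (θ+φ) * Real.tan φ))))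
        + ((1+ρ)*(1+ρ)^m * Real.sin φ * (((m:ℝ)+1) * (ρ*(R-1)*(R+1+ρ)/((1+ρ)*(R*(R+ρ))))))
        + (-((1+ρ)*(1+ρ)^m * Real.sin φ * (((m:ℝ)+1) * ((1/Real.cos θ - 1)*(1/Real.cos φ - 1)))))
        + (((m:ℝ)+1) * (φ^2*(1/(2*Z) - Real.tan θ)
            + Real.tan θ * (φ^2 - (1+ρ)*(1+ρ)^m * Real.sin φ * Real.tan φ / Real.cos (θ+φ)))) := by
    rw [show m+2-2 = m from rfl, show m+2-1 = m+1 from rfl]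
    simp only [Real.tan_eq_sin_div_cos, Real.sin_add, Real.cos_add]
    push_cast
    linear_combination hid
  rw [hEq]
  -- bound each term
  have hT1 : |((m:ℝ)+1) * ((1+ρ)^m*(Real.cos φ - 1) + ρ*(1-(1+ρ)^m)) * (ρ/(2*Z))|
      ≤ (((m:ℝ)+2)*((m:ℝ)+1)*2^m) * (δ * ((ρ^2+φ^2)/(2*Z))) := by
    have hinner : |(1+ρ)^m*(Real.cos φ - 1) + ρ*(1-(1+ρ)^m)| ≤ ((m:ℝ)+1)*2^m*(ρ^2+φ^2) := by
      calc |(1+ρ)^m*(Real.cos φ - 1) + ρ*(1-(1+ρ)^m)|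
          ≤ |(1+ρ)^m*(Real.cos φ - 1)| + |ρ*(1-(1+ρ)^m)| := abs_add_le _ _
        _ = (1+ρ)^m* |Real.cos φ - 1| + |ρ| * |1-(1+ρ)^m| := by
            rw [abs_mul, abs_mul, abs_of_pos hP0]
        _ ≤ 2^m*(φ^2/2) + |ρ| *((m:ℝ)*2^m* |ρ|) := by
            gcongr
        _ = 2^m*(φ^2/2) + (m:ℝ)*2^m*(|ρ| * |ρ|) := by ring
        _ = 2^m*(φ^2/2) + (m:ℝ)*2^m*ρ^2 := by rw [abs_mul_abs_self]; ring
        _ ≤ ((m:ℝ)+1)*2^m*(ρ^2+φ^2) := bnd1 (m:ℝ) (2^m) ρ φ hm0 h2m0.le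
    calc |((m:ℝ)+1) * ((1+ρ)^m*(Real.cos φ - 1) + ρ*(1-(1+ρ)^m)) * (ρ/(2*Z))|
        = ((m:ℝ)+1) * |(1+ρ)^m*(Real.cos φ - 1) + ρ*(1-(1+ρ)^m)| * (|ρ|/(2*Z)) := by
          rw [abs_mul, abs_mul, abs_div, abs_of_pos (by positivity : (0:ℝ) < 2*Z),
            abs_of_pos (by positivity : (0:ℝ) < (m:ℝ)+1)]
      _ ≤ ((m:ℝ)+1) * (((m:ℝ)+1)*2^m*(ρ^2+φ^2)) * (δ/(2*Z)) := by gcongr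
      _ ≤ (((m:ℝ)+2)*((m:ℝ)+1)*2^m) * (δ * ((ρ^2+φ^2)/(2*Z))) := by
          rw [show ((m:ℝ)+1) * (((m:ℝ)+1)*2^m*(ρ^2+φ^2)) * (δ/(2*Z))
              = (((m:ℝ)+1)*((m:ℝ)+1)*2^m) * (δ * ((ρ^2+φ^2)/(2*Z))) from by ring]
          apply mul_le_mul_of_nonneg_right _ (by positivity)
          apply mul_le_mul_of_nonneg_right _ h2m0.le
          apply mul_le_mul_of_nonneg_right (by linarith : ((m:ℝ)+1) ≤ (m:ℝ)+2) (by positivity)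
  have hmpos : (0:ℝ) < (m:ℝ)+1 := by positivity
  have hcφρ : |Real.cos φ - (1+ρ)| ≤ φ^2/2 + |ρ| := by
    rw [show Real.cos φ - (1+ρ) = (Real.cos φ - 1) + (-ρ) from by ring]
    calc |(Real.cos φ - 1) + (-ρ)| ≤ |Real.cos φ - 1| + |(-ρ)| := abs_add_le _ _
      _ ≤ φ^2/2 + |ρ| := by rw [abs_neg]; gcongr
  have hT2 : |(-(((m:ℝ)+1) * (1+ρ)^m * (Real.cos φ - (1+ρ)) * (Real.tan θ * (Real.tan (θ+φ) * Real.tan φ))))|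
      ≤ (216*(((m:ℝ)+1)*2^m)) * (δ * ((ρ^2+φ^2)/(2*Z))) := by
    have hkey : (φ^2/2 + |ρ|) * |φ| ≤ 4*(ρ^2+φ^2) := by
      have := bnd2 ρ φ hφ1
      linarith [hr0]
    calc |(-(((m:ℝ)+1) * (1+ρ)^m * (Real.cos φ - (1+ρ)) * (Real.tan θ * (Real.tan (θ+φ) * Real.tan φ))))|
        = ((m:ℝ)+1) * (1+ρ)^m * |Real.cos φ - (1+ρ)| * (|Real.tan θ| * (|Real.tan (θ+φ)| * |Real.tan φ|)) := by
          rw [abs_neg]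
          simp only [abs_mul]
          rw [abs_of_pos hP0, abs_of_pos hmpos]
      _ ≤ ((m:ℝ)+1) * 2^m * (φ^2/2 + |ρ|) * ((3*(1/Z)) * ((3*δ) * (3* |φ|))) := by
          gcongr
      _ = (((m:ℝ)+1)*2^m*(27*δ)) * (((φ^2/2 + |ρ|) * |φ|)/Z) := by ring
      _ ≤ (((m:ℝ)+1)*2^m*(27*δ)) * ((4*(ρ^2+φ^2))/Z) := by gcongr
      _ = (216*(((m:ℝ)+1)*2^m)) * (δ * ((ρ^2+φ^2)/(2*Z))) := by ring
  have hT3 : |((1+ρ)*(1+ρ)^m * Real.sin φ * (((m:ℝ)+1) * (ρ*(R-1)*(R+1+ρ)/((1+ρ)*(R*(R+ρ))))))|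
      ≤ (72*(((m:ℝ)+1)*2^m)) * (δ * ((ρ^2+φ^2)/(2*Z))) := by
    have hden : (1/2:ℝ)*((1/2)*(1/2)) ≤ (1+ρ)*(R*(R+ρ)) := bnd3 _ _ _ h1ρlo hRlo hRtlo
    have hquot : |ρ*(R-1)*(R+1+ρ)/((1+ρ)*(R*(R+ρ)))| ≤ (|ρ| *(δ/Z)*3)/((1/2)*((1/2)*(1/2))) := by
      have habs3 : |R+1+ρ| ≤ 3 := by rw [abs_le]; constructor <;> linarith
      rw [abs_div, abs_of_pos (by linarith : (0:ℝ) < (1+ρ)*(R*(R+ρ)))]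
      apply div_le_div₀ (by positivity) _ (by norm_num) hden
      rw [abs_mul, abs_mul]
      gcongr
    calc |((1+ρ)*(1+ρ)^m * Real.sin φ * (((m:ℝ)+1) * (ρ*(R-1)*(R+1+ρ)/((1+ρ)*(R*(R+ρ))))))|
        = (1+ρ)*(1+ρ)^m * |Real.sin φ| * (((m:ℝ)+1) * |ρ*(R-1)*(R+1+ρ)/((1+ρ)*(R*(R+ρ)))|) := by
          simp only [abs_mul]
          rw [abs_of_pos hP0, abs_of_pos hmpos, abs_of_pos (by linarith : (0:ℝ) < 1+ρ)]
      _ ≤ (3/2)*2^m* |φ| * (((m:ℝ)+1) * ((|ρ| *(δ/Z)*3)/((1/2)*((1/2)*(1/2))))) := by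
          gcongr
      _ = (((m:ℝ)+1)*2^m*(36*δ)) * ((|ρ| * |φ|)/Z) := by field_simp; ring
      _ ≤ (((m:ℝ)+1)*2^m*(36*δ)) * ((ρ^2+φ^2)/Z) := by gcongr
      _ = (72*(((m:ℝ)+1)*2^m)) * (δ * ((ρ^2+φ^2)/(2*Z))) := by ring
  have hθ2Z : θ^2 ≤ δ*(1/Z) := by
    have t1 : |θ| * |θ| ≤ (1/Z)*(1/Z) := mul_self_le_mul_self (abs_nonneg θ) hθ1
    have t2 : (1/Z)*(1/Z) ≤ δ*(1/Z) := mul_le_mul_of_nonneg_right hZδ (by positivity)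
    calc θ^2 = |θ| * |θ| := by rw [abs_mul_abs_self]; ring
      _ ≤ δ*(1/Z) := t1.trans t2
  have hT4 : |(-((1+ρ)*(1+ρ)^m * Real.sin φ * (((m:ℝ)+1) * ((1/Real.cos θ - 1)*(1/Real.cos φ - 1)))))|
      ≤ (3*(((m:ℝ)+1)*2^m)) * (δ * ((ρ^2+φ^2)/(2*Z))) := by
    have hφ3 : |φ| *φ^2 ≤ ρ^2+φ^2 := bnd4 ρ φ hφ1
    calc |(-((1+ρ)*(1+ρ)^m * Real.sin φ * (((m:ℝ)+1) * ((1/Real.cos θ - 1)*(1/Real.cos φ - 1)))))|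
        = (1+ρ)*(1+ρ)^m * |Real.sin φ| * (((m:ℝ)+1) * (|1/Real.cos θ - 1| * |1/Real.cos φ - 1|)) := by
          rw [abs_neg]
          simp only [abs_mul]
          rw [abs_of_pos hP0, abs_of_pos hmpos, abs_of_pos (by linarith : (0:ℝ) < 1+ρ)]
      _ ≤ (3/2)*2^m* |φ| * (((m:ℝ)+1) * ((δ*(1/Z)) * φ^2)) := by
          have hx1 : |1/Real.cos θ - 1| ≤ δ*(1/Z) := h1cθ.trans hθ2Z
          have hx2 : |1/Real.cos φ - 1| ≤ φ^2 := h1cφ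
          gcongr
      _ = (((m:ℝ)+1)*2^m*((3/2)*δ)) * ((|φ| *φ^2)/Z) := by ring
      _ ≤ (((m:ℝ)+1)*2^m*((3/2)*δ)) * ((ρ^2+φ^2)/Z) := by gcongr
      _ = (3*(((m:ℝ)+1)*2^m)) * (δ * ((ρ^2+φ^2)/(2*Z))) := by ring
  -- T5
  have hA : |1/(2*Z) - Real.tan θ| ≤ 3*(δ*(1/Z)) := by
    have h1 : |1/(2*Z) - θ| ≤ δ/Z := by rw [abs_sub_comm]; exact hθ2
    have h2 : |θ - Real.tan θ| ≤ 2* |θ|^3 := by rw [abs_sub_comm]; exact abs_tan_sub_le hθa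
    have e1 : |θ|^3 ≤ (1/Z)^3 := pow_le_pow_left₀ (abs_nonneg θ) hθ1 3
    have e2 : (1/Z)^3 ≤ δ*(1/Z) := by
      have t3 : (1/Z)*(1/Z) ≤ δ*1 := mul_le_mul hZδ hZ1 (by positivity) hδ0.le
      calc (1/Z)^3 = ((1/Z)*(1/Z))*(1/Z) := by ring
        _ ≤ (δ*1)*(1/Z) := mul_le_mul_of_nonneg_right t3 (by positivity)
        _ = δ*(1/Z) := by ring
    calc |1/(2*Z) - Real.tan θ| = |(1/(2*Z) - θ) + (θ - Real.tan θ)| := by ring_nf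
      _ ≤ |1/(2*Z) - θ| + |θ - Real.tan θ| := abs_add_le _ _
      _ ≤ δ/Z + 2*(δ*(1/Z)) := by
          have := e1.trans e2
          linarith
      _ = 3*(δ*(1/Z)) := by ring
  have hB : |φ^2 - Real.sin φ*Real.tan φ| ≤ 3*(δ*φ^2) := by
    have b1 : |φ - Real.tan φ| ≤ 2* |φ|^3 := by rw [abs_sub_comm]; exact abs_tan_sub_le hφ1
    have b2 : |φ - Real.sin φ| ≤ |φ|^3/4 := by rw [abs_sub_comm]; exact abs_sin_sub_le hφ1
    calc |φ^2 - Real.sin φ*Real.tan φ|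
        = |φ*(φ - Real.tan φ) + Real.tan φ*(φ - Real.sin φ)| := by
          rw [show φ^2 - Real.sin φ*Real.tan φ = φ*(φ - Real.tan φ) + Real.tan φ*(φ - Real.sin φ) from by ring]
      _ ≤ |φ*(φ - Real.tan φ)| + |Real.tan φ*(φ - Real.sin φ)| := abs_add_le _ _
      _ = |φ| * |φ - Real.tan φ| + |Real.tan φ| * |φ - Real.sin φ| := by rw [abs_mul, abs_mul]
      _ ≤ |φ| *(2* |φ|^3) + (3* |φ|)*(|φ|^3/4) := by gcongr
      _ ≤ 3*(δ*φ^2) := bnd5 δ φ hφ hδ1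
  have hC : |Real.sin φ*Real.tan φ| ≤ 3*φ^2 := by
    calc |Real.sin φ*Real.tan φ| = |Real.sin φ| * |Real.tan φ| := abs_mul _ _
      _ ≤ |φ| * (3* |φ|) := by gcongr
      _ = 3*(|φ| * |φ|) := by ring
      _ = 3*φ^2 := by rw [abs_mul_abs_self]; ring
  have hD : |1 - (1+ρ)*(1+ρ)^m/Real.cos (θ+φ)| ≤ 4*((((m:ℝ)+1)*2^(m+1))*δ) := by
    have hct0' : (0:ℝ) < Real.cos (θ+φ) := by linarith
    have he : 1 - (1+ρ)*(1+ρ)^m/Real.cos (θ+φ)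
        = (Real.cos (θ+φ) - (1+ρ)*(1+ρ)^m)/Real.cos (θ+φ) := by field_simp
    have hn1 : |Real.cos (θ+φ) - (1+ρ)*(1+ρ)^m|
        ≤ (θ+φ)^2/2 + ((m:ℝ)+1)*2^(m+1)*δ := by
      calc |Real.cos (θ+φ) - (1+ρ)*(1+ρ)^m|
          = |(-(1 - Real.cos (θ+φ))) + (1 - (1+ρ)*(1+ρ)^m)| := by ring_nf
        _ ≤ |(-(1 - Real.cos (θ+φ)))| + |1 - (1+ρ)*(1+ρ)^m| := abs_add_le _ _
        _ ≤ (θ+φ)^2/2 + ((m:ℝ)+1)*2^(m+1)*δ := by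
            rw [abs_neg]
            gcongr
            · exact abs_one_sub_cos_le
            · exact h1P'.trans (by gcongr)
    have hsq : (θ+φ)^2 ≤ δ := by
      have t1 : |θ+φ| * |θ+φ| ≤ δ*δ := mul_self_le_mul_self (abs_nonneg _) hθtb
      have t2 : δ*δ ≤ δ := by
        calc δ*δ ≤ δ*1 := mul_le_mul_of_nonneg_left hδ1 hδ0.le
          _ = δ := mul_one δ
      calc (θ+φ)^2 = |θ+φ| * |θ+φ| := by rw [abs_mul_abs_self]; ring
        _ ≤ δ := t1.trans t2
    rw [he, abs_div, abs_of_pos hct0']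
    calc |Real.cos (θ+φ) - (1+ρ)*(1+ρ)^m|/Real.cos (θ+φ)
        ≤ ((θ+φ)^2/2 + ((m:ℝ)+1)*2^(m+1)*δ)/(1/2) :=
          div_le_div₀ (by positivity) hn1 (by norm_num) hct
      _ = (θ+φ)^2 + 2*(((m:ℝ)+1)*2^(m+1)*δ) := by ring
      _ ≤ δ + 2*(((m:ℝ)+1)*2^(m+1)*δ) := by linarith [hsq]
      _ ≤ 4*((((m:ℝ)+1)*2^(m+1))*δ) := by
          have h1 : (1:ℝ) ≤ ((m:ℝ)+1)*2^(m+1) := by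
            have h2 : (1:ℝ) ≤ 2^(m+1) := one_le_pow₀ (by norm_num)
            have h3 : (1:ℝ)*1 ≤ ((m:ℝ)+1)*2^(m+1) :=
              mul_le_mul (by linarith) h2 (by norm_num) (by linarith)
            linarith
          have h4 : δ*1 ≤ δ*(((m:ℝ)+1)*2^(m+1)) := mul_le_mul_of_nonneg_left h1 hδ0.le
          linarith
  have hW : |φ^2 - (1+ρ)*(1+ρ)^m * Real.sin φ * Real.tan φ / Real.cos (θ+φ)|
      ≤ 3*(δ*φ^2) + (3*φ^2)*(4*((((m:ℝ)+1)*2^(m+1))*δ)) := by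
    calc |φ^2 - (1+ρ)*(1+ρ)^m * Real.sin φ * Real.tan φ / Real.cos (θ+φ)|
        = |(φ^2 - Real.sin φ*Real.tan φ) + (Real.sin φ*Real.tan φ)*(1 - (1+ρ)*(1+ρ)^m/Real.cos (θ+φ))| := by
          rw [show φ^2 - (1+ρ)*(1+ρ)^m * Real.sin φ * Real.tan φ / Real.cos (θ+φ)
            = (φ^2 - Real.sin φ*Real.tan φ) + (Real.sin φ*Real.tan φ)*(1 - (1+ρ)*(1+ρ)^m/Real.cos (θ+φ)) from by ring]
      _ ≤ |φ^2 - Real.sin φ*Real.tan φ| + |Real.sin φ*Real.tan φ| * |1 - (1+ρ)*(1+ρ)^m/Real.cos (θ+φ)| := by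
          rw [← abs_mul]; exact abs_add_le _ _
      _ ≤ 3*(δ*φ^2) + (3*φ^2)*(4*((((m:ℝ)+1)*2^(m+1))*δ)) := by
          have := mul_le_mul hC hD (abs_nonneg _) (by positivity)
          linarith [hB]
  have hT5 : |(((m:ℝ)+1) * (φ^2*(1/(2*Z) - Real.tan θ)
        + Real.tan θ * (φ^2 - (1+ρ)*(1+ρ)^m * Real.sin φ * Real.tan φ / Real.cos (θ+φ))))|
      ≤ (96*(((m:ℝ)+1)^2*2^(m+1))) * (δ * ((ρ^2+φ^2)/(2*Z))) := by
    calc |(((m:ℝ)+1) * (φ^2*(1/(2*Z) - Real.tan θ)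
          + Real.tan θ * (φ^2 - (1+ρ)*(1+ρ)^m * Real.sin φ * Real.tan φ / Real.cos (θ+φ))))|
        ≤ ((m:ℝ)+1) * (φ^2 * |1/(2*Z) - Real.tan θ|
            + |Real.tan θ| * |φ^2 - (1+ρ)*(1+ρ)^m * Real.sin φ * Real.tan φ / Real.cos (θ+φ)|) := by
          rw [abs_mul, abs_of_pos hmpos]
          gcongr
          calc |φ^2*(1/(2*Z) - Real.tan θ)
              + Real.tan θ * (φ^2 - (1+ρ)*(1+ρ)^m * Real.sin φ * Real.tan φ / Real.cos (θ+φ))|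
              ≤ |φ^2*(1/(2*Z) - Real.tan θ)|
                + |Real.tan θ * (φ^2 - (1+ρ)*(1+ρ)^m * Real.sin φ * Real.tan φ / Real.cos (θ+φ))| := abs_add_le _ _
            _ = φ^2 * |1/(2*Z) - Real.tan θ|
                + |Real.tan θ| * |φ^2 - (1+ρ)*(1+ρ)^m * Real.sin φ * Real.tan φ / Real.cos (θ+φ)| := by
                rw [abs_mul, abs_mul, abs_of_nonneg (sq_nonneg φ)]
      _ ≤ ((m:ℝ)+1) * (φ^2 * (3*(δ*(1/Z)))
            + (3*(1/Z)) * (3*(δ*φ^2) + (3*φ^2)*(4*((((m:ℝ)+1)*2^(m+1))*δ)))) := by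
          gcongr
      _ = (((m:ℝ)+1)*(24 + 72*(((m:ℝ)+1)*2^(m+1)))) * (δ*(φ^2/(2*Z))) := by ring
      _ ≤ (96*(((m:ℝ)+1)^2*2^(m+1))) * (δ*(φ^2/(2*Z))) := by
          apply mul_le_mul_of_nonneg_right _ (by positivity)
          exact bnd6 (m:ℝ) (2^(m+1)) hm0 (one_le_pow₀ (by norm_num))
      _ ≤ (96*(((m:ℝ)+1)^2*2^(m+1))) * (δ * ((ρ^2+φ^2)/(2*Z))) := by gcongr
  -- assemble
  set T1 := (((m:ℝ)+1) * ((1+ρ)^m*(Real.cos φ - 1) + ρ*(1-(1+ρ)^m)) * (ρ/(2*Z))) with hT1def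
  set T2 := (-(((m:ℝ)+1) * (1+ρ)^m * (Real.cos φ - (1+ρ)) * (Real.tan θ * (Real.tan (θ+φ) * Real.tan φ)))) with hT2def
  set T3 := ((1+ρ)*(1+ρ)^m * Real.sin φ * (((m:ℝ)+1) * (ρ*(R-1)*(R+1+ρ)/((1+ρ)*(R*(R+ρ)))))) with hT3def
  set T4 := (-((1+ρ)*(1+ρ)^m * Real.sin φ * (((m:ℝ)+1) * ((1/Real.cos θ - 1)*(1/Real.cos φ - 1))))) with hT4def
  set T5 := (((m:ℝ)+1) * (φ^2*(1/(2*Z) - Real.tan θ)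
      + Real.tan θ * (φ^2 - (1+ρ)*(1+ρ)^m * Real.sin φ * Real.tan φ / Real.cos (θ+φ)))) with hT5def
  have habs : |T1 + T2 + T3 + T4 + T5| ≤ |T1| + |T2| + |T3| + |T4| + |T5| := by
    calc |T1 + T2 + T3 + T4 + T5| ≤ |T1 + T2 + T3 + T4| + |T5| := abs_add_le _ _
      _ ≤ (|T1 + T2 + T3| + |T4|) + |T5| := by gcongr; exact abs_add_le _ _
      _ ≤ ((|T1 + T2| + |T3|) + |T4|) + |T5| := by gcongr; exact abs_add_le _ _
      _ ≤ (((|T1| + |T2|) + |T3|) + |T4|) + |T5| := by gcongr; exact abs_add_le _ _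
      _ = |T1| + |T2| + |T3| + |T4| + |T5| := by ring
  have hsum : |T1 + T2 + T3 + T4 + T5|
      ≤ ((((m:ℝ)+2)*((m:ℝ)+1) + 216*((m:ℝ)+1) + 72*((m:ℝ)+1) + 3*((m:ℝ)+1)
          + 96*(((m:ℝ)+1)^2*2)) * 2^m) * (δ * ((ρ^2+φ^2)/(2*Z))) := by
    have hr : (96*(((m:ℝ)+1)^2*2^(m+1))) * (δ * ((ρ^2+φ^2)/(2*Z)))
        = ((96*(((m:ℝ)+1)^2*2))*2^m) * (δ * ((ρ^2+φ^2)/(2*Z))) := by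
      rw [pow_succ]; ring
    rw [hr] at hT5
    calc |T1 + T2 + T3 + T4 + T5| ≤ |T1| + |T2| + |T3| + |T4| + |T5| := habs
      _ ≤ _ := by
        have := hT1; have := hT2; have := hT3; have := hT4; have := hT5
        linarith
  calc |T1 + T2 + T3 + T4 + T5|
      ≤ ((((m:ℝ)+2)*((m:ℝ)+1) + 216*((m:ℝ)+1) + 72*((m:ℝ)+1) + 3*((m:ℝ)+1)
          + 96*(((m:ℝ)+1)^2*2)) * 2^m) * (δ * ((ρ^2+φ^2)/(2*Z))) := hsum
    _ ≤ (1024*((m:ℝ)+2)^2 * 2^m) * (δ * ((ρ^2+φ^2)/(2*Z))) := by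
        apply mul_le_mul_of_nonneg_right _ (by positivity)
        apply mul_le_mul_of_nonneg_right (bnd7 (m:ℝ) hm0) h2m0.le
    _ = 2^(m+2+8) * ((m+2:ℕ):ℝ)^2 * (δ * ((ρ^2 + φ^2)/(2*Z))) := by
        have hp : (2:ℝ)^(m+2+8) = 2^m*1024 := by
          rw [show m+2+8 = m+10 from by omega, pow_add]; norm_num
        rw [hp]
        push_cast
        ring

noncomputable def H (n : ℕ) (R θ : ℝ) : ℝ := R ^ (n - 1) * (Real.cos θ - ((n : ℝ) - 1) * R / n)

theorem deriv_h_expansion (n : ℕ) (hn : 2 ≤ n) (R θ Rt θt : ℝ → ℝ)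
    (hdom : ∀ Z > (0 : ℝ), 0 < R Z ∧ θ Z ∈ Set.Ioo (-(π / 2)) (π / 2))
    (hdomt : ∀ Z > (0 : ℝ), 0 < Rt Z ∧ θt Z ∈ Set.Ioo (-(π / 2)) (π / 2))
    (hR : ∀ Z > (0 : ℝ), HasDerivAt R (-Real.tan (θ Z) + R Z / (2 * Z)) Z)
    (hθ : ∀ Z > (0 : ℝ),
      HasDerivAt θ (((n : ℝ) - 1) * (1 / Real.cos (θ Z) - 1 / R Z)) Z)
    (hRt : ∀ Z > (0 : ℝ), HasDerivAt Rt (-Real.tan (θt Z) + Rt Z / (2 * Z)) Z)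
    (hθt : ∀ Z > (0 : ℝ),
      HasDerivAt θt (((n : ℝ) - 1) * (1 / Real.cos (θt Z) - 1 / Rt Z)) Z)
    (hlim : Tendsto (fun Z => (R Z, θ Z)) atTop (nhds (1, 0)))
    (hlimt : Tendsto (fun Z => (Rt Z, θt Z)) atTop (nhds (1, 0)))
    (hRasymp : (fun Z => R Z - 1) =o[atTop] fun Z : ℝ => 1 / Z)
    (hθasymp : (fun Z => θ Z - 1 / (2 * Z)) =o[atTop] fun Z : ℝ => 1 / Z)
    (ρ φ h : ℝ → ℝ)
    (hρ : ρ = fun Z => Rt Z - R Z) (hφ : φ = fun Z => θt Z - θ Z)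
    (hh : h = fun Z => H n (1 + ρ Z) (φ Z)) :
    (fun Z => deriv h Z + ((n : ℝ) - 1) * ((ρ Z) ^ 2 + (φ Z) ^ 2) / (2 * Z))
      =o[atTop] fun Z => ((ρ Z) ^ 2 + (φ Z) ^ 2) / (2 * Z) := by
  subst hρ hφ hh
  -- limits of components
  have hR_lim : Tendsto R atTop (nhds 1) := (continuous_fst.tendsto _).comp hlim
  have hθ_lim : Tendsto θ atTop (nhds 0) := (continuous_snd.tendsto _).comp hlim
  have hRt_lim : Tendsto Rt atTop (nhds 1) := (continuous_fst.tendsto _).comp hlimt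
  have hθt_lim : Tendsto θt atTop (nhds 0) := (continuous_snd.tendsto _).comp hlimt
  have hρ_lim : Tendsto (fun Z => Rt Z - R Z) atTop (nhds 0) := by
    simpa using hRt_lim.sub hR_lim
  have hφ_lim : Tendsto (fun Z => θt Z - θ Z) atTop (nhds 0) := by
    simpa using hθt_lim.sub hθ_lim
  -- derivative of h
  have key : ∀ Z : ℝ, 0 < Z → HasDerivAt (fun Y => H n (1 + (Rt Y - R Y)) (θt Y - θ Y))
      (((n:ℝ)-1) * (1+(Rt Z - R Z))^(n-2)
          * ((-Real.tan (θ Z + (θt Z - θ Z)) + (R Z + (Rt Z - R Z))/(2*Z)) - (-Real.tan (θ Z) + R Z/(2*Z)))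
          * (Real.cos (θt Z - θ Z) - ((n:ℝ)-1)*(1+(Rt Z - R Z))/n)
        + (1+(Rt Z - R Z))^(n-1) * (-Real.sin (θt Z - θ Z)
              * ((((n:ℝ)-1) * (1/Real.cos (θ Z + (θt Z - θ Z)) - 1/(R Z + (Rt Z - R Z))))
                - (((n:ℝ)-1) * (1/Real.cos (θ Z) - 1/(R Z))))
            - ((n:ℝ)-1) * ((-Real.tan (θ Z + (θt Z - θ Z)) + (R Z + (Rt Z - R Z))/(2*Z))
                - (-Real.tan (θ Z) + R Z/(2*Z))) / n)) Z := by
    intro Z hZ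
    have hθtZ : θ Z + (θt Z - θ Z) = θt Z := by ring
    have hRtZ : R Z + (Rt Z - R Z) = Rt Z := by ring
    rw [hθtZ, hRtZ]
    have hρd : HasDerivAt (fun Y => Rt Y - R Y)
        ((-Real.tan (θt Z) + Rt Z/(2*Z)) - (-Real.tan (θ Z) + R Z/(2*Z))) Z :=
      (hRt Z hZ).sub (hR Z hZ)
    have h1ρd : HasDerivAt (fun Y => 1 + (Rt Y - R Y))
        ((-Real.tan (θt Z) + Rt Z/(2*Z)) - (-Real.tan (θ Z) + R Z/(2*Z))) Z :=
      hρd.const_add 1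
    have hφd : HasDerivAt (fun Y => θt Y - θ Y)
        ((((n:ℝ)-1) * (1/Real.cos (θt Z) - 1/(Rt Z)))
          - (((n:ℝ)-1) * (1/Real.cos (θ Z) - 1/(R Z)))) Z :=
      (hθt Z hZ).sub (hθ Z hZ)
    have hpow := h1ρd.pow (n-1)
    have hcos := hφd.cos
    have hlin := (h1ρd.const_mul ((n:ℝ)-1)).div_const (n:ℝ)
    have hmul := hpow.mul (hcos.sub hlin)
    have hfun : (fun Y => H n (1 + (Rt Y - R Y)) (θt Y - θ Y))
        = (fun Y => (1 + (Rt Y - R Y))^(n-1)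
            * (Real.cos (θt Y - θ Y) - ((n:ℝ)-1) * (1 + (Rt Y - R Y)) / n)) := by
      funext Y; simp [H]
    rw [hfun]
    refine hmul.congr_deriv ?_
    simp only [Pi.pow_apply, Pi.sub_apply]
    rw [show n-1-1 = n-2 from by omega]
    have hcast : ((n-1:ℕ):ℝ) = (n:ℝ)-1 := by
      push_cast [Nat.cast_sub (by omega : 1 ≤ n)]; ring
    rw [hcast]
    try ring
  -- main estimate
  rw [Asymptotics.isLittleO_iff]
  intro ε hε
  have hnR : (0:ℝ) < n := by
    have : (2:ℝ) ≤ n := by exact_mod_cast hn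
    linarith
  set C : ℝ := 2^(n+8) * n^2 with hCdef
  have hC0 : (0:ℝ) < C := by positivity
  set δ : ℝ := min (1/2) (ε/C) with hδdef
  have hδ0 : 0 < δ := lt_min (by norm_num) (div_pos hε hC0)
  have hδhalf : δ ≤ 1/2 := min_le_left _ _
  have hδε : C * δ ≤ ε := by
    have h1 : δ ≤ ε/C := min_le_right _ _
    calc C * δ ≤ C * (ε/C) := mul_le_mul_of_nonneg_left h1 hC0.le
      _ = ε := by field_simp
  have f1 : ∀ᶠ Z : ℝ in atTop, (1:ℝ) ≤ Z := eventually_ge_atTop 1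
  have f2 : ∀ᶠ Z : ℝ in atTop, 1/δ ≤ Z := eventually_ge_atTop (1/δ)
  have habs : ∀ (f : ℝ → ℝ) (a : ℝ), Tendsto f atTop (nhds a) →
      ∀ b : ℝ, 0 < b → ∀ᶠ Z : ℝ in atTop, |f Z - a| ≤ b := by
    intro f a hf b hb
    have := Metric.tendsto_nhds.mp hf b hb
    filter_upwards [this] with Z hZ
    rw [Real.dist_eq] at hZ
    exact hZ.le
  have f3 : ∀ᶠ Z : ℝ in atTop, |Rt Z - R Z| ≤ δ := by
    have := habs _ _ hρ_lim δ hδ0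
    filter_upwards [this] with Z hZ using by simpa using hZ
  have f4 : ∀ᶠ Z : ℝ in atTop, |θt Z - θ Z| ≤ δ := by
    have := habs _ _ hφ_lim δ hδ0
    filter_upwards [this] with Z hZ using by simpa using hZ
  have f5 : ∀ᶠ Z : ℝ in atTop, |θt Z| ≤ δ := by
    have := habs _ _ hθt_lim δ hδ0
    filter_upwards [this] with Z hZ using by simpa using hZ
  have f6 : ∀ᶠ Z : ℝ in atTop, |Rt Z - 1| ≤ 1/2 := habs _ _ hRt_lim (1/2) (by norm_num)
  have f7 : ∀ᶠ Z : ℝ in atTop, ‖R Z - 1‖ ≤ δ * ‖1/Z‖ :=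
    Asymptotics.isLittleO_iff.mp hRasymp hδ0
  have f8 : ∀ᶠ Z : ℝ in atTop, ‖θ Z - 1/(2*Z)‖ ≤ δ * ‖1/Z‖ :=
    Asymptotics.isLittleO_iff.mp hθasymp hδ0
  have f9 : ∀ᶠ Z : ℝ in atTop, ‖θ Z - 1/(2*Z)‖ ≤ (1/2) * ‖1/Z‖ :=
    Asymptotics.isLittleO_iff.mp hθasymp (by norm_num : (0:ℝ) < 1/2)
  filter_upwards [f1, f2, f3, f4, f5, f6, f7, f8, f9] with Z h1 h2 h3 h4 h5 h6 h7 h8 h9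
  rw [Real.norm_eq_abs, Real.norm_eq_abs] at h7 h8 h9
  have hZ0 : (0:ℝ) < Z := by linarith
  have hZabs : |1/Z| = 1/Z := abs_of_pos (by positivity)
  have hZδ : 1/Z ≤ δ := by
    rw [div_le_iff₀ hZ0]
    calc (1:ℝ) = δ * (1/δ) := by field_simp
      _ ≤ δ * Z := mul_le_mul_of_nonneg_left h2 hδ0.le
  have hθ1 : |θ Z| ≤ 1/Z := by
    have h9' : |θ Z - 1/(2*Z)| ≤ (1/2)*(1/Z) := by rwa [hZabs] at h9
    have t : |θ Z| ≤ |θ Z - 1/(2*Z)| + |1/(2*Z)| := by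
      calc |θ Z| = |(θ Z - 1/(2*Z)) + 1/(2*Z)| := by ring_nf
        _ ≤ _ := abs_add_le _ _
    have t2 : |1/(2*Z)| = 1/(2*Z) := abs_of_pos (by positivity)
    rw [t2] at t
    calc |θ Z| ≤ (1/2)*(1/Z) + 1/(2*Z) := by linarith
      _ = 1/Z := by ring
  have h7' : |R Z - 1| ≤ δ/Z := by
    rw [hZabs, mul_one_div] at h7; exact h7
  have h8' : |θ Z - 1/(2*Z)| ≤ δ/Z := by
    rw [hZabs, mul_one_div] at h8; exact h8
  have h6' : |R Z + (Rt Z - R Z) - 1| ≤ 1/2 := by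
    rw [show R Z + (Rt Z - R Z) = Rt Z from by ring]; exact h6
  have h5' : |θ Z + (θt Z - θ Z)| ≤ δ := by
    rw [show θ Z + (θt Z - θ Z) = θt Z from by ring]; exact h5
  have hkb := key_bound n hn δ Z (Rt Z - R Z) (θt Z - θ Z) (θ Z) (R Z)
    hδhalf hδ0 h1 hZδ h3 h4 hθ1 h8' h7' h5' h6'
  have hD := (key Z hZ0).deriv
  simp only [Real.norm_eq_abs]
  rw [hD]
  calc |_ + ((n:ℝ)-1) * ((Rt Z - R Z)^2 + (θt Z - θ Z)^2) / (2*Z)|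
      ≤ 2^(n+8) * n^2 * (δ * (((Rt Z - R Z)^2 + (θt Z - θ Z)^2)/(2*Z))) := hkb
    _ = (C*δ) * (((Rt Z - R Z)^2 + (θt Z - θ Z)^2)/(2*Z)) := by rw [hCdef]; ring
    _ ≤ ε * (((Rt Z - R Z)^2 + (θt Z - θ Z)^2)/(2*Z)) :=
        mul_le_mul_of_nonneg_right hδε (by positivity)
    _ = ε * |((Rt Z - R Z)^2 + (θt Z - θ Z)^2)/(2*Z)| := by
        rw [abs_of_nonneg (by positivity)]
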